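/- Let Σ₁,…,Σ_E be D×D symmetric positive definite matrices, σ_e² > 0, β*, η* ∈ ℝ^D, and δ₁,…,δ_E ∈ ℝ^D. Suppose β_e = β* + Σ_e⁻¹(η* + δ_e) and S_β is invertible. Let β̃ = S_β⁻¹[(Σ_e Σ_e⁻¹/σ_e²)(Σ_e Σ_e β_e/σ_e²) − (Σ_e 1/σ_e²)(Σ_e β_e/σ_e²)]. Then ‖S_β(β̃ − β*)‖ ≤ (Σ_e 1/σ_e²)(‖Σ_e Σ_e⁻¹/σ_e²‖ + Σ_e ‖Σ_e⁻¹‖/σ_e²) · sup_e ‖δ_e‖. -/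

import Mathlib

open Matrix Finset

/-- Euclidean norm of a vector in `ℝ^D`. -/
noncomputable def evnorm {D : ℕ} (v : Fin D → ℝ) : ℝ :=
  ‖(WithLp.equiv 2 (Fin D → ℝ)).symm v‖

/-- Euclidean (ℓ²) operator norm of a `D × D` real matrix. -/
noncomputable def eopnorm {D : ℕ} (M : Matrix (Fin D) (Fin D) ℝ) : ℝ :=
  ‖Matrix.toEuclideanCLM (𝕜 := ℝ) M‖

lemma evnorm_nonneg {D : ℕ} (v : Fin D → ℝ) : 0 ≤ evnorm v := norm_nonneg _

lemma evnorm_smul {D : ℕ} (c : ℝ) (v : Fin D → ℝ) : evnorm (c • v) = |c| * evnorm v := by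
  show ‖c • ((WithLp.equiv 2 (Fin D → ℝ)).symm v)‖ = _
  rw [norm_smul, Real.norm_eq_abs, evnorm]

lemma evnorm_sub_le {D : ℕ} (x y : Fin D → ℝ) : evnorm (x - y) ≤ evnorm x + evnorm y := by
  show ‖((WithLp.equiv 2 (Fin D → ℝ)).symm x) - ((WithLp.equiv 2 (Fin D → ℝ)).symm y)‖ ≤ _
  exact norm_sub_le _ _

lemma evnorm_sum_le {D : ℕ} {ι : Type*} (s : Finset ι) (f : ι → Fin D → ℝ) :
    evnorm (∑ i ∈ s, f i) ≤ ∑ i ∈ s, evnorm (f i) := by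
  simp only [evnorm, WithLp.equiv_symm_apply, WithLp.toLp_sum]
  exact norm_sum_le _ _

lemma evnorm_mulVec_le {D : ℕ} (M : Matrix (Fin D) (Fin D) ℝ) (x : Fin D → ℝ) :
    evnorm (M.mulVec x) ≤ eopnorm M * evnorm x := by
  have h := (Matrix.toEuclideanCLM (𝕜 := ℝ) M).le_opNorm ((WithLp.equiv 2 (Fin D → ℝ)).symm x)
  rw [WithLp.equiv_symm_apply, Matrix.toEuclideanCLM_toLp] at h
  exact h

lemma sum_mulVec' {D : ℕ} {ι : Type*} (s : Finset ι) (f : ι → Matrix (Fin D) (Fin D) ℝ)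
    (x : Fin D → ℝ) : (∑ i ∈ s, f i).mulVec x = ∑ i ∈ s, (f i).mulVec x := by
  induction s using Finset.cons_induction with
  | empty => simp [Matrix.zero_mulVec]
  | cons a s ha ih => simp [Finset.sum_cons, Matrix.add_mulVec, ih]

/-- Robustness of KL regression to model misspecification: with
`β_e = β* + Σ_e⁻¹(η* + δ_e)`, the estimation error satisfies
`‖S_β(β̃ − β*)‖ ≤ (Σ_e 1/σ_e²)(‖Σ_e Σ_e⁻¹/σ_e²‖ + Σ_e ‖Σ_e⁻¹‖/σ_e²) · sup_e ‖δ_e‖`. -/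
theorem kl_regression_robustness {D E : ℕ} (hE : 1 ≤ E)
    (S : Fin E → Matrix (Fin D) (Fin D) ℝ) (s2 : Fin E → ℝ) (b : Fin E → Fin D → ℝ)
    (hS : ∀ e, (S e).PosDef) (hs2 : ∀ e, 0 < s2 e)
    (bstar etastar : Fin D → ℝ) (δ : Fin E → Fin D → ℝ)
    (hmodel : ∀ e, b e = bstar + (S e)⁻¹.mulVec (etastar + δ e))
    (Sbeta : Matrix (Fin D) (Fin D) ℝ)
    (hSbeta : Sbeta = (∑ e, (s2 e)⁻¹ • (S e)⁻¹) * (∑ e, (s2 e)⁻¹ • S e)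
      - ((∑ e, (s2 e)⁻¹) ^ 2) • (1 : Matrix (Fin D) (Fin D) ℝ))
    (hinv : IsUnit Sbeta)
    (btilde : Fin D → ℝ)
    (hbt : btilde = Sbeta⁻¹.mulVec
        ((∑ e, (s2 e)⁻¹ • (S e)⁻¹).mulVec (∑ e, (s2 e)⁻¹ • (S e).mulVec (b e))
          - (∑ e, (s2 e)⁻¹) • (∑ e, (s2 e)⁻¹ • b e))) :
    evnorm (Sbeta.mulVec (btilde - bstar)) ≤
      (∑ e, (s2 e)⁻¹) *
        (eopnorm (∑ e, (s2 e)⁻¹ • (S e)⁻¹) + ∑ e, (s2 e)⁻¹ * eopnorm (S e)⁻¹) *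
        (⨆ e, evnorm (δ e)) := by
  have hE' : Nonempty (Fin E) := ⟨⟨0, hE⟩⟩
  set c : ℝ := ∑ e, (s2 e)⁻¹ with hc
  set A : Matrix (Fin D) (Fin D) ℝ := ∑ e, (s2 e)⁻¹ • (S e)⁻¹ with hA
  set B : Matrix (Fin D) (Fin D) ℝ := ∑ e, (s2 e)⁻¹ • S e with hB
  set v : Fin D → ℝ := ∑ e, (s2 e)⁻¹ • δ e with hv
  set w : Fin D → ℝ := ∑ e, (s2 e)⁻¹ • ((S e)⁻¹.mulVec (δ e)) with hw
  have hdet : IsUnit Sbeta.det := (Matrix.isUnit_iff_isUnit_det _).mp hinv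
  have hSbinv : Sbeta * Sbeta⁻¹ = 1 := Matrix.mul_nonsing_inv _ hdet
  have hmv1 : ∀ e (x : Fin D → ℝ), (S e).mulVec ((S e)⁻¹.mulVec x) = x := by
    intro e x
    rw [Matrix.mulVec_mulVec,
      Matrix.mul_nonsing_inv _ (isUnit_iff_ne_zero.mpr (hS e).det_pos.ne'), Matrix.one_mulVec]
  -- the key algebraic identity
  have h1 : ∑ e, (s2 e)⁻¹ • (S e).mulVec (b e) = B.mulVec bstar + c • etastar + v := by
    have : ∀ e ∈ Finset.univ, (s2 e)⁻¹ • (S e).mulVec (b e)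
        = (s2 e)⁻¹ • (S e).mulVec bstar + (s2 e)⁻¹ • etastar + (s2 e)⁻¹ • δ e := by
      intro e _
      rw [hmodel e, Matrix.mulVec_add, hmv1 e, smul_add, smul_add, add_assoc]
    rw [Finset.sum_congr rfl this, Finset.sum_add_distrib, Finset.sum_add_distrib,
      hB, sum_mulVec', ← Finset.sum_smul, hv]
    congr 2
    exact Finset.sum_congr rfl fun e _ => (Matrix.smul_mulVec _ _ _).symm
  have h2 : ∑ e, (s2 e)⁻¹ • b e = c • bstar + A.mulVec etastar + w := by
    have : ∀ e ∈ Finset.univ, (s2 e)⁻¹ • b e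
        = (s2 e)⁻¹ • bstar + (s2 e)⁻¹ • ((S e)⁻¹.mulVec etastar)
          + (s2 e)⁻¹ • ((S e)⁻¹.mulVec (δ e)) := by
      intro e _
      rw [hmodel e, Matrix.mulVec_add, smul_add, smul_add, add_assoc]
    rw [Finset.sum_congr rfl this, Finset.sum_add_distrib, Finset.sum_add_distrib,
      hA, sum_mulVec', ← Finset.sum_smul, hw]
    congr 2
    exact Finset.sum_congr rfl fun e _ => (Matrix.smul_mulVec _ _ _).symm
  have key : Sbeta.mulVec (btilde - bstar) = A.mulVec v - c • w := by
    rw [hbt, Matrix.mulVec_sub, Matrix.mulVec_mulVec, hSbinv, Matrix.one_mulVec, h1, h2,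
      hSbeta]
    simp only [Matrix.mulVec_add, Matrix.mulVec_smul, Matrix.sub_mulVec,
      Matrix.smul_mulVec, Matrix.one_mulVec, ← Matrix.mulVec_mulVec, smul_add, smul_smul]
    module
  -- norm bounds
  set M0 : ℝ := ⨆ e, evnorm (δ e) with hM0
  have hbdd : BddAbove (Set.range fun e => evnorm (δ e)) :=
    (Set.finite_range _).bddAbove
  have hδle : ∀ e, evnorm (δ e) ≤ M0 := fun e => le_ciSup hbdd e
  have hM0nn : 0 ≤ M0 := le_trans (evnorm_nonneg _) (hδle ⟨0, hE⟩)
  have hcnn : 0 ≤ c := Finset.sum_nonneg fun e _ => (inv_pos.mpr (hs2 e)).le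
  have hvle : evnorm v ≤ c * M0 := by
    calc evnorm v ≤ ∑ e, evnorm ((s2 e)⁻¹ • δ e) := evnorm_sum_le _ _
      _ = ∑ e, (s2 e)⁻¹ * evnorm (δ e) := by
          refine Finset.sum_congr rfl fun e _ => ?_
          rw [evnorm_smul, abs_of_nonneg (inv_pos.mpr (hs2 e)).le]
      _ ≤ ∑ e, (s2 e)⁻¹ * M0 := Finset.sum_le_sum fun e _ =>
          mul_le_mul_of_nonneg_left (hδle e) (inv_pos.mpr (hs2 e)).le
      _ = c * M0 := by rw [← Finset.sum_mul]
  have hwle : evnorm w ≤ (∑ e, (s2 e)⁻¹ * eopnorm (S e)⁻¹) * M0 := by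
    calc evnorm w ≤ ∑ e, evnorm ((s2 e)⁻¹ • ((S e)⁻¹.mulVec (δ e))) := evnorm_sum_le _ _
      _ ≤ ∑ e, (s2 e)⁻¹ * eopnorm (S e)⁻¹ * M0 := by
          refine Finset.sum_le_sum fun e _ => ?_
          rw [evnorm_smul, abs_of_nonneg (inv_pos.mpr (hs2 e)).le, mul_assoc]
          refine mul_le_mul_of_nonneg_left ?_ (inv_pos.mpr (hs2 e)).le
          exact le_trans (evnorm_mulVec_le _ _)
            (mul_le_mul_of_nonneg_left (hδle e) (norm_nonneg _))
      _ = (∑ e, (s2 e)⁻¹ * eopnorm (S e)⁻¹) * M0 := by rw [← Finset.sum_mul]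
  rw [key]
  calc evnorm (A.mulVec v - c • w) ≤ evnorm (A.mulVec v) + evnorm (c • w) :=
        evnorm_sub_le _ _
    _ ≤ eopnorm A * (c * M0) + c * ((∑ e, (s2 e)⁻¹ * eopnorm (S e)⁻¹) * M0) := by
        refine add_le_add ?_ ?_
        · exact le_trans (evnorm_mulVec_le _ _)
            (mul_le_mul_of_nonneg_left hvle (norm_nonneg _))
        · rw [evnorm_smul, abs_of_nonneg hcnn]
          exact mul_le_mul_of_nonneg_left hwle hcnn
    _ = c * (eopnorm A + ∑ e, (s2 e)⁻¹ * eopnorm (S e)⁻¹) * M0 := by ring
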